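/- Let 1 ≤ k ≤ N and let Λ be either Λᵃ(kπh) or Λᵒ(kπh). Then Λ ≠ 10 and the vector φ with nodal components φ_j = sin(kπx_j) and midpoint components φ_{j+1/2} = ((40+Λ)/(8(10−Λ)))·(φ_j + φ_{j+1}) satisfies both P2 spectral equations with eigenvalue Λ; that is, (Λ/h², φ) is a generalized eigenpair of the P2 stiffness/mass system. -/

import Mathlib

open Real

noncomputable def Delta (η : ℝ) : ℝ :=
  1 + 268 * Real.cos (η / 2) ^ 2 - 44 * Real.cos (η / 2) ^ 4

noncomputable def Lama (η : ℝ) : ℝ :=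
  120 * Real.sin (η / 2) ^ 2 / (11 + 4 * Real.cos (η / 2) ^ 2 + Real.sqrt (Delta η))

noncomputable def Lamo (η : ℝ) : ℝ :=
  (22 + 8 * Real.cos (η / 2) ^ 2 + 2 * Real.sqrt (Delta η)) / (1 + Real.sin (η / 2) ^ 2)

lemma eq1_alg (Λ p q : ℝ) (hD : (10:ℝ) - Λ ≠ 0) :
    -(8/3)*p + (16/3)*((40+Λ)/(8*(10-Λ))*(p+q)) - (8/3)*q
      - Λ*((1/15)*p + (8/15)*((40+Λ)/(8*(10-Λ))*(p+q)) + (1/15)*q) = 0 := by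
  field_simp
  ring

lemma eq2_alg (Λ c p q : ℝ) (hD : (10:ℝ) - Λ ≠ 0)
    (hQ : (2 - c^2)*Λ^2 - 4*(11+4*c^2)*Λ + 240*(1-c^2) = 0) :
    (1/3)*(2*(2*c^2-1)*p - q)
      - (8/3)*((40+Λ)/(8*(10-Λ))*((2*(2*c^2-1)*p - q) + p)) + (14/3)*p
      - (8/3)*((40+Λ)/(8*(10-Λ))*(p+q)) + (1/3)*q
      - Λ*(-(1/30)*(2*(2*c^2-1)*p - q)
          + (1/15)*((40+Λ)/(8*(10-Λ))*((2*(2*c^2-1)*p - q) + p)) + (4/15)*p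
          + (1/15)*((40+Λ)/(8*(10-Λ))*(p+q)) - (1/30)*q) = 0 := by
  field_simp
  linear_combination (1800*p)*hQ

theorem stmt_7 (N : ℕ) (hN : 1 ≤ N) (h : ℝ) (hh : h = 1 / ((N : ℝ) + 1))
    (k : ℕ) (hk1 : 1 ≤ k) (hkN : k ≤ N)
    (Λ : ℝ) (hΛ : Λ = Lama ((k : ℝ) * Real.pi * h) ∨ Λ = Lamo ((k : ℝ) * Real.pi * h))
    (φ : ℕ → ℝ) (hφ : ∀ j : ℕ, φ j = Real.sin ((k : ℝ) * Real.pi * ((j : ℝ) * h)))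
    (ψ : ℕ → ℝ)
    (hψ : ∀ j : ℕ, ψ j = (40 + Λ) / (8 * (10 - Λ)) * (φ j + φ (j + 1))) :
    Λ ≠ 10 ∧ φ 0 = 0 ∧ φ (N + 1) = 0 ∧
    (∀ j : ℕ, j ≤ N →
      -(8 / 3) * φ j + (16 / 3) * ψ j - (8 / 3) * φ (j + 1)
        - Λ * ((1 / 15) * φ j + (8 / 15) * ψ j + (1 / 15) * φ (j + 1)) = 0) ∧
    (∀ j : ℕ, 1 ≤ j → j ≤ N →
      (1 / 3) * φ (j - 1) - (8 / 3) * ψ (j - 1) + (14 / 3) * φ j - (8 / 3) * ψ j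
        + (1 / 3) * φ (j + 1)
        - Λ * (-(1 / 30) * φ (j - 1) + (1 / 15) * ψ (j - 1) + (4 / 15) * φ j
            + (1 / 15) * ψ j - (1 / 30) * φ (j + 1)) = 0) := by
  set η : ℝ := (k : ℝ) * Real.pi * h with hηdef
  set c : ℝ := Real.cos (η / 2) with hcdef
  set r : ℝ := Real.sqrt (Delta η) with hrdef
  have hNpos : (0:ℝ) < (N : ℝ) + 1 := by positivity
  have hhpos : 0 < h := by rw [hh]; positivity
  have hη0 : 0 < η := by
    have : (0:ℝ) < (k:ℝ) := by exact_mod_cast hk1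
    have := Real.pi_pos
    positivity
  have hηπ : η < Real.pi := by
    have hkn : (k:ℝ) < (N:ℝ) + 1 := by exact_mod_cast Nat.lt_succ_of_le hkN
    have : η = ((k:ℝ) / ((N:ℝ)+1)) * Real.pi := by rw [hηdef, hh]; ring
    rw [this]
    have h1 : (k:ℝ) / ((N:ℝ)+1) < 1 := (div_lt_one hNpos).mpr hkn
    nlinarith [Real.pi_pos]
  have hcpos : 0 < c := by
    apply Real.cos_pos_of_mem_Ioo
    constructor
    · nlinarith [Real.pi_pos]
    · linarith
  have hc1 : c ^ 2 ≤ 1 := Real.cos_sq_le_one (η/2)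
  have hΔ : Delta η = 1 + 268 * c^2 - 44 * c^4 := rfl
  have hΔpos : 0 < Delta η := by rw [hΔ]; nlinarith [sq_nonneg c, sq_nonneg (c^2)]
  have hr2 : r ^ 2 = 1 + 268 * c^2 - 44 * c^4 := by
    rw [hrdef, Real.sq_sqrt hΔpos.le, hΔ]
  have hrpos : 0 ≤ r := Real.sqrt_nonneg _
  have hs2 : Real.sin (η/2) ^ 2 = 1 - c^2 := by
    have := Real.sin_sq_add_cos_sq (η/2); rw [hcdef]; linarith
  -- the characteristic quadratic
  have hQ : (2 - c^2)*Λ^2 - 4*(11+4*c^2)*Λ + 240*(1-c^2) = 0 := by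
    rcases hΛ with hΛa | hΛo
    · have hden : (0:ℝ) < 11 + 4*c^2 + r := by nlinarith [sq_nonneg c]
      have hΛ' : Λ = 120 * (1 - c^2) / (11 + 4*c^2 + r) := by
        rw [hΛa, Lama, ← hs2, hcdef, hrdef]
      rw [hΛ']
      field_simp
      linear_combination (240-240*c^2)*hr2
    · have hden : (0:ℝ) < 2 - c^2 := by nlinarith
      have hΛ' : Λ = (22 + 8*c^2 + 2*r) / (2 - c^2) := by
        rw [hΛo, Lamo, hs2, hcdef, hrdef]; ring_nf
      rw [hΛ']
      field_simp
      linear_combination (4)*hr2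
  have h10 : Λ ≠ 10 := by
    intro heq
    rw [heq] at hQ
    nlinarith [mul_pos hcpos hcpos]
  have hD : (10:ℝ) - Λ ≠ 0 := sub_ne_zero.mpr (Ne.symm h10)
  -- φ in terms of η
  have hφη : ∀ j : ℕ, φ j = Real.sin ((j : ℝ) * η) := by
    intro j
    rw [hφ j, hηdef, show (k:ℝ) * Real.pi * ((j:ℝ) * h) = (j:ℝ) * ((k:ℝ) * Real.pi * h) by ring]
  refine ⟨h10, ?_, ?_, ?_, ?_⟩
  · rw [hφη 0]; simp
  · rw [hφ (N+1), hh]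
    have : (k:ℝ) * Real.pi * (((N:ℝ)+1) * (1 / ((N:ℝ)+1))) = (k:ℝ) * Real.pi := by
      field_simp
    push_cast
    rw [this]
    exact Real.sin_nat_mul_pi k
  · intro j _
    rw [hψ j]
    exact eq1_alg Λ (φ j) (φ (j+1)) hD
  · intro j hj1 hjN
    have hjj : j - 1 + 1 = j := Nat.succ_pred_eq_of_pos hj1
    have hCη : Real.cos η = 2*c^2 - 1 := by
      have := Real.cos_two_mul (η/2)
      rw [show 2*(η/2) = η by ring] at this
      rw [this, hcdef]
    have hkey : φ (j-1) = 2*(2*c^2-1) * φ j - φ (j+1) := by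
      rw [hφη (j-1), hφη j, hφη (j+1), ← hCη]
      have hcast : ((j-1 : ℕ) : ℝ) = (j:ℝ) - 1 := by
        push_cast [hj1]
        ring
      rw [hcast]
      push_cast
      rw [show ((j:ℝ) - 1) * η = (j:ℝ)*η - η by ring,
          show ((j:ℝ) + 1) * η = (j:ℝ)*η + η by ring,
          Real.sin_sub, Real.sin_add]
      ring
    rw [hψ (j-1), hψ j, hjj, hkey]
    exact eq2_alg Λ c (φ j) (φ (j+1)) hD hQ
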